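/- arXiv:2502.00407 — 3 statements merged into one kernel-verified Lean document; each statement's English description precedes it below -/
import Mathlib

section
/- Let Σℓ ∈ ℝ^{ℓ×ℓ} be symmetric positive definite and Σh ∈ ℝ^{h×h} be symmetric, with h ≤ ℓ. Define f(A) = Tr((AᵀΣℓA)⁻¹ Σh) + log det(AᵀΣℓA). Let A ∈ ℝ^{ℓ×h} be such that AᵀΣℓA is positive definite, and set Ã = (AᵀΣℓA)⁻¹. Then f has Fréchet derivative at A given by the linear map H ↦ Tr(Gᵀ H), where G = 2 (Σℓ A Ã)(I_h − Σh Ã); i.e., the Euclidean gradient of f at A is 2 (Σℓ A Ã)(I_h − Σh Ã). -/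
open Matrix

attribute [local instance] Matrix.normedAddCommGroup Matrix.normedSpace

/-- The continuous linear map `H ↦ Tr(Gᵀ H)` on `ℓ×h` real matrices. -/
noncomputable def traceCLM {ℓ h : ℕ} (G : Matrix (Fin ℓ) (Fin h) ℝ) :
    Matrix (Fin ℓ) (Fin h) ℝ →L[ℝ] ℝ :=
  LinearMap.toContinuousLinearMap
    { toFun := fun H => (Gᵀ * H).trace
      map_add' := fun X Y => by simp [Matrix.mul_add]
      map_smul' := fun c X => by simp [Matrix.mul_smul] }

open Polynomial

/-- Matrix multiplication as a continuous bilinear map. -/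
noncomputable def mulCLM (a b c : ℕ) :
    Matrix (Fin a) (Fin b) ℝ →L[ℝ] Matrix (Fin b) (Fin c) ℝ →L[ℝ] Matrix (Fin a) (Fin c) ℝ :=
  LinearMap.toContinuousLinearMap
    { toFun := fun X => LinearMap.toContinuousLinearMap
        { toFun := fun Y => X * Y
          map_add' := fun Y Z => Matrix.mul_add X Y Z
          map_smul' := fun r Y => (Matrix.mul_smul X r Y) }
      map_add' := fun X Y => by
        apply ContinuousLinearMap.ext; intro Z
        simp [Matrix.add_mul]
      map_smul' := fun r X => by
        apply ContinuousLinearMap.ext; intro Z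
        simp [Matrix.smul_mul] }

@[simp] lemma mulCLM_apply {a b c : ℕ} (X : Matrix (Fin a) (Fin b) ℝ)
    (Y : Matrix (Fin b) (Fin c) ℝ) : mulCLM a b c X Y = X * Y := rfl

lemma norm_mul_le_mul (a b c : ℕ) : ∃ C : ℝ, 0 < C ∧
    ∀ (X : Matrix (Fin a) (Fin b) ℝ) (Y : Matrix (Fin b) (Fin c) ℝ),
      ‖X * Y‖ ≤ C * ‖X‖ * ‖Y‖ := by
  refine ⟨(b : ℝ) + 1, by positivity, fun X Y => ?_⟩
  have hX := norm_nonneg X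
  have hY := norm_nonneg Y
  rw [Matrix.norm_le_iff (by positivity)]
  intro i j
  rw [Matrix.mul_apply]
  calc ‖∑ k, X i k * Y k j‖ ≤ ∑ k, ‖X i k * Y k j‖ := norm_sum_le _ _
    _ ≤ ∑ _k : Fin b, ‖X‖ * ‖Y‖ := Finset.sum_le_sum fun k _ => by
        rw [norm_mul]
        exact mul_le_mul (Matrix.norm_entry_le_entrywise_sup_norm X)
          (Matrix.norm_entry_le_entrywise_sup_norm Y) (norm_nonneg _) hX
    _ = (b : ℝ) * (‖X‖ * ‖Y‖) := by simp
    _ ≤ ((b : ℝ) + 1) * ‖X‖ * ‖Y‖ := by nlinarith [mul_nonneg hX hY]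

/-- `H ↦ P * H * Q` as a CLM. -/
noncomputable def sandCLM {n : ℕ} (P Q : Matrix (Fin n) (Fin n) ℝ) :
    Matrix (Fin n) (Fin n) ℝ →L[ℝ] Matrix (Fin n) (Fin n) ℝ :=
  LinearMap.toContinuousLinearMap
    { toFun := fun H => P * H * Q
      map_add' := fun X Y => by simp [Matrix.mul_add, Matrix.add_mul]
      map_smul' := fun r X => by simp [Matrix.mul_smul, Matrix.smul_mul] }

@[simp] lemma sandCLM_apply {n : ℕ} (P Q H : Matrix (Fin n) (Fin n) ℝ) :
    sandCLM P Q H = P * H * Q := rfl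

theorem hasFDerivAt_matrix_inv {n : ℕ} (B : Matrix (Fin n) (Fin n) ℝ) (hB : IsUnit B.det) :
    HasFDerivAt (fun X : Matrix (Fin n) (Fin n) ℝ => X⁻¹) (-sandCLM B⁻¹ B⁻¹) B := by
  obtain ⟨c, hc, hmul⟩ := norm_mul_le_mul n n n
  have hdet : B.det ≠ 0 := isUnit_iff_ne_zero.mp hB
  have hBi : B⁻¹ * B = 1 := Matrix.nonsing_inv_mul B hB
  have hBi' : B * B⁻¹ = 1 := Matrix.mul_nonsing_inv B hB
  have hcont : ContinuousAt (fun X : Matrix (Fin n) (Fin n) ℝ => X⁻¹) B := by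
    apply continuousAt_matrix_inv
    rw [show (Ring.inverse : ℝ → ℝ) = fun x => x⁻¹ from funext Ring.inverse_eq_inv]
    exact continuousAt_inv₀ hdet
  have hφ : Filter.Tendsto (fun X : Matrix (Fin n) (Fin n) ℝ => X⁻¹ * (X - B) * B⁻¹)
      (nhds B) (nhds 0) := by
    have : ContinuousAt (fun X : Matrix (Fin n) (Fin n) ℝ => X⁻¹ * (X - B) * B⁻¹) B :=
      ((hcont.mul (continuousAt_id.sub continuousAt_const)).mul continuousAt_const)
    simpa [ContinuousAt] using this
  refine hasFDerivAt_iff_isLittleO.mpr ?_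
  rw [Asymptotics.isLittleO_iff]
  intro ε hε
  set δ : ℝ := ε / (c * c * ‖B⁻¹‖ + 1) with hδdef
  have hδpos : 0 < δ := by positivity
  have h1 : ∀ᶠ X : Matrix (Fin n) (Fin n) ℝ in nhds B, X.det ≠ 0 :=
    (continuous_id.matrix_det.continuousAt).eventually_ne hdet
  have h2 : ∀ᶠ X : Matrix (Fin n) (Fin n) ℝ in nhds B, ‖X⁻¹ * (X - B) * B⁻¹‖ < δ := by
    have := NormedAddCommGroup.tendsto_nhds_zero.mp hφ δ hδpos
    exact this
  filter_upwards [h1, h2] with X hX1 hX2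
  have hu : IsUnit X.det := isUnit_iff_ne_zero.mpr hX1
  have hXi : X⁻¹ * X = 1 := Matrix.nonsing_inv_mul X hu
  have e1 : X⁻¹ * (X - B) * B⁻¹ = B⁻¹ - X⁻¹ := by
    rw [Matrix.mul_sub, hXi, Matrix.sub_mul, Matrix.one_mul, Matrix.mul_assoc, hBi',
      Matrix.mul_one]
  have key : X⁻¹ - B⁻¹ - (-sandCLM B⁻¹ B⁻¹) (X - B)
      = (X⁻¹ * (X - B) * B⁻¹) * ((X - B) * B⁻¹) := by
    simp only [ContinuousLinearMap.neg_apply, sandCLM_apply, sub_neg_eq_add, e1]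
    have h3 : X⁻¹ * (X * B⁻¹) = B⁻¹ := by rw [← Matrix.mul_assoc, hXi, Matrix.one_mul]
    simp only [Matrix.sub_mul, Matrix.mul_sub, Matrix.mul_assoc, hBi', Matrix.mul_one,
      Matrix.one_mul, h3]
    abel
  refine (congrArg (‖·‖) key).trans_le ?_
  have b1 : ‖(X⁻¹ * (X - B) * B⁻¹) * ((X - B) * B⁻¹)‖
      ≤ c * ‖X⁻¹ * (X - B) * B⁻¹‖ * (c * ‖X - B‖ * ‖B⁻¹‖) := by
    calc ‖(X⁻¹ * (X - B) * B⁻¹) * ((X - B) * B⁻¹)‖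
        ≤ c * ‖X⁻¹ * (X - B) * B⁻¹‖ * ‖(X - B) * B⁻¹‖ := hmul _ _
      _ ≤ c * ‖X⁻¹ * (X - B) * B⁻¹‖ * (c * ‖X - B‖ * ‖B⁻¹‖) := by
          have := hmul (X - B) B⁻¹
          have h0 : (0:ℝ) ≤ c * ‖X⁻¹ * (X - B) * B⁻¹‖ := by positivity
          exact mul_le_mul_of_nonneg_left this h0
  refine b1.trans ?_
  have hnn : (0:ℝ) ≤ ‖X - B‖ := norm_nonneg _
  have hnb : (0:ℝ) ≤ ‖B⁻¹‖ := norm_nonneg _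
  have hδle : δ * (c * c * ‖B⁻¹‖ + 1) = ε := by
    rw [hδdef]; exact div_mul_cancel₀ ε (by positivity)
  nlinarith [hX2.le, mul_le_mul_of_nonneg_right hX2.le (mul_nonneg (mul_nonneg hc.le hc.le) hnb)]

/-- entry as CLM -/
noncomputable def entryCLM {a b : ℕ} (i : Fin a) (j : Fin b) :
    Matrix (Fin a) (Fin b) ℝ →L[ℝ] ℝ :=
  LinearMap.toContinuousLinearMap
    { toFun := fun X => X i j
      map_add' := fun _ _ => rfl
      map_smul' := fun _ _ => rfl }

theorem differentiable_det {n : ℕ} :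
    Differentiable ℝ (fun X : Matrix (Fin n) (Fin n) ℝ => X.det) := by
  have : (fun X : Matrix (Fin n) (Fin n) ℝ => X.det)
      = fun X => ∑ σ : Equiv.Perm (Fin n),
          (Equiv.Perm.sign σ : ℝ) * ∏ i, X (σ i) i := by
    funext X
    rw [Matrix.det_apply]
    simp [Units.smul_def, zsmul_eq_mul]
  rw [this]
  apply Differentiable.fun_sum
  intro σ _
  apply Differentiable.const_mul
  intro X
  exact (HasFDerivAt.finset_prod (u := Finset.univ)
    (fun i _ => (entryCLM (σ i) i).hasFDerivAt (x := X))).differentiableAt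

/-- trace-mul CLM : H ↦ (C * H).trace -/
noncomputable def trCLM {n : ℕ} (C : Matrix (Fin n) (Fin n) ℝ) :
    Matrix (Fin n) (Fin n) ℝ →L[ℝ] ℝ :=
  LinearMap.toContinuousLinearMap
    { toFun := fun H => (C * H).trace
      map_add' := fun X Y => by simp [Matrix.mul_add]
      map_smul' := fun r X => by simp [Matrix.mul_smul] }

@[simp] lemma trCLM_apply {n : ℕ} (C H : Matrix (Fin n) (Fin n) ℝ) :
    trCLM C H = (C * H).trace := rfl

theorem hasFDerivAt_det {n : ℕ} (B : Matrix (Fin n) (Fin n) ℝ) (hB : IsUnit B.det) :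
    HasFDerivAt (fun X : Matrix (Fin n) (Fin n) ℝ => X.det) (B.det • trCLM B⁻¹) B := by
  have hd : DifferentiableAt ℝ (fun X : Matrix (Fin n) (Fin n) ℝ => X.det) B :=
    differentiable_det B
  have h0 := hd.hasFDerivAt
  suffices hsuff : fderiv ℝ (fun X : Matrix (Fin n) (Fin n) ℝ => X.det) B
      = B.det • trCLM B⁻¹ by rwa [hsuff] at h0
  apply ContinuousLinearMap.ext
  intro H
  have hγ : HasDerivAt (fun t : ℝ => B + t • H) H 0 := by
    have h1 : HasDerivAt (fun t : ℝ => t • H) ((1:ℝ) • H) 0 :=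
      (hasDerivAt_id (0:ℝ)).smul_const H
    have h2 := h1.const_add B
    simp only [one_smul] at h2
    exact h2
  have hcomp : HasDerivAt (fun t : ℝ => (B + t • H).det)
      (fderiv ℝ (fun X : Matrix (Fin n) (Fin n) ℝ => X.det) B H) 0 := by
    exact h0.comp_hasDerivAt_of_eq (0:ℝ) hγ (by simp)
  set M : Matrix (Fin n) (Fin n) ℝ := B⁻¹ * H with hM
  set P : Polynomial ℝ := (Matrix.det (1 + (X : ℝ[X]) • M.map C)).divX.divX with hP
  have hfun : (fun t : ℝ => (B + t • H).det)
      = fun t => B.det * (1 + M.trace * t + P.eval t * t ^ 2) := by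
    funext t
    have hfactor : B + t • H = B * (1 + t • M) := by
      rw [Matrix.mul_add, Matrix.mul_one, Matrix.mul_smul, hM,
        Matrix.mul_nonsing_inv_cancel_left B H hB]
    rw [hfactor, Matrix.det_mul, Matrix.det_one_add_smul t M]
  have hexp : HasDerivAt (fun t : ℝ => B.det * (1 + M.trace * t + P.eval t * t ^ 2))
      (B.det * M.trace) 0 := by
    have h1 : HasDerivAt (fun t : ℝ => 1 + M.trace * t + P.eval t * t ^ 2) M.trace 0 := by
      have ha : HasDerivAt (fun t : ℝ => 1 + M.trace * t) M.trace 0 := by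
        simpa using ((hasDerivAt_id (0:ℝ)).const_mul M.trace).const_add 1
      have hb : HasDerivAt (fun t : ℝ => P.eval t * t ^ 2)
          (P.derivative.eval 0 * 0 ^ 2 + P.eval 0 * (2 * 0 ^ 1)) 0 :=
        (P.hasDerivAt 0).mul (hasDerivAt_pow 2 0)
      have h2 := ha.add hb
      simp only [ne_eq, OfNat.ofNat_ne_zero, not_false_eq_true, zero_pow, mul_zero, pow_one,
        add_zero] at h2
      exact h2
    simpa using h1.const_mul B.det
  rw [hfun] at hcomp
  have := hcomp.unique hexp
  rw [this]
  simp [hM]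

/-- `M ↦ Mᵀ * S` as a CLM. -/
noncomputable def tsCLM {l h : ℕ} (S : Matrix (Fin l) (Fin l) ℝ) :
    Matrix (Fin l) (Fin h) ℝ →L[ℝ] Matrix (Fin h) (Fin l) ℝ :=
  LinearMap.toContinuousLinearMap
    { toFun := fun M => Mᵀ * S
      map_add' := fun X Y => by simp [Matrix.transpose_add, Matrix.add_mul]
      map_smul' := fun r X => by simp [Matrix.transpose_smul, Matrix.smul_mul] }

@[simp] lemma tsCLM_apply {l h : ℕ} (S : Matrix (Fin l) (Fin l) ℝ)
    (M : Matrix (Fin l) (Fin h) ℝ) : tsCLM S M = Mᵀ * S := rfl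

/-- `Y ↦ (Y * S).trace` as a CLM. -/
noncomputable def trRCLM {n : ℕ} (S : Matrix (Fin n) (Fin n) ℝ) :
    Matrix (Fin n) (Fin n) ℝ →L[ℝ] ℝ :=
  LinearMap.toContinuousLinearMap
    { toFun := fun Y => (Y * S).trace
      map_add' := fun X Y => by simp [Matrix.add_mul]
      map_smul' := fun r X => by simp [Matrix.smul_mul] }

@[simp] lemma trRCLM_apply {n : ℕ} (S Y : Matrix (Fin n) (Fin n) ℝ) :
    trRCLM S Y = (Y * S).trace := rfl

@[simp] lemma traceCLM_apply {ℓ h : ℕ} (G H : Matrix (Fin ℓ) (Fin h) ℝ) :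
    traceCLM G H = (Gᵀ * H).trace := rfl

/-- The Euclidean gradient of `f(A) = Tr((AᵀΣℓA)⁻¹ Σh) + log det(AᵀΣℓA)` at a point `A`
where `AᵀΣℓA` is positive definite is `G = 2 (Σℓ A Ã)(I_h − Σh Ã)`, with
`Ã = (AᵀΣℓA)⁻¹`; i.e. `f` has Fréchet derivative `H ↦ Tr(Gᵀ H)` at `A`. -/
theorem stmt_3 {ℓ h : ℕ} (hle : h ≤ ℓ)
    (Sl : Matrix (Fin ℓ) (Fin ℓ) ℝ) (hSl : Sl.PosDef)
    (Sh : Matrix (Fin h) (Fin h) ℝ) (hSh : Sh.IsSymm)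
    (A : Matrix (Fin ℓ) (Fin h) ℝ) (hA : (Aᵀ * Sl * A).PosDef) :
    HasFDerivAt
      (fun M : Matrix (Fin ℓ) (Fin h) ℝ =>
        ((Mᵀ * Sl * M)⁻¹ * Sh).trace + Real.log (Mᵀ * Sl * M).det)
      (traceCLM ((2 : ℝ) •
        ((Sl * A * (Aᵀ * Sl * A)⁻¹) * (1 - Sh * (Aᵀ * Sl * A)⁻¹))))
      A := by
  have hdet0 : (Aᵀ * Sl * A).det ≠ 0 := hA.det_pos.ne'
  have hu : IsUnit (Aᵀ * Sl * A).det := isUnit_iff_ne_zero.mpr hdet0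
  set T : Matrix (Fin h) (Fin h) ℝ := (Aᵀ * Sl * A)⁻¹ with hTdef
  set DQ : Matrix (Fin ℓ) (Fin h) ℝ →L[ℝ] Matrix (Fin h) (Fin h) ℝ :=
    (mulCLM h ℓ h).precompR (Matrix (Fin ℓ) (Fin h) ℝ) (Aᵀ * Sl)
        (ContinuousLinearMap.id ℝ _)
      + (mulCLM h ℓ h).precompL (Matrix (Fin ℓ) (Fin h) ℝ) (tsCLM Sl) A with hDQ
  have hquad : HasFDerivAt (fun M : Matrix (Fin ℓ) (Fin h) ℝ => Mᵀ * Sl * M) DQ A := by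
    have := (mulCLM h ℓ h).hasFDerivAt_of_bilinear
      ((tsCLM Sl).hasFDerivAt (x := A)) (hasFDerivAt_id A)
    exact this
  have hinvq : HasFDerivAt (fun M : Matrix (Fin ℓ) (Fin h) ℝ => (Mᵀ * Sl * M)⁻¹)
      ((-sandCLM T T).comp DQ) A :=
    HasFDerivAt.comp (g := fun X : Matrix (Fin h) (Fin h) ℝ => X⁻¹)
      (f := fun M : Matrix (Fin ℓ) (Fin h) ℝ => Mᵀ * Sl * M) A
      (hasFDerivAt_matrix_inv (Aᵀ * Sl * A) hu) hquad
  have hpart1 : HasFDerivAt (fun M : Matrix (Fin ℓ) (Fin h) ℝ => ((Mᵀ * Sl * M)⁻¹ * Sh).trace)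
      ((trRCLM Sh).comp ((-sandCLM T T).comp DQ)) A :=
    ((trRCLM Sh).hasFDerivAt).comp A hinvq
  have hdetc : HasFDerivAt (fun M : Matrix (Fin ℓ) (Fin h) ℝ => (Mᵀ * Sl * M).det)
      (((Aᵀ * Sl * A).det • trCLM T).comp DQ) A :=
    HasFDerivAt.comp (g := fun X : Matrix (Fin h) (Fin h) ℝ => X.det)
      (f := fun M : Matrix (Fin ℓ) (Fin h) ℝ => Mᵀ * Sl * M) A
      (hasFDerivAt_det (Aᵀ * Sl * A) hu) hquad
  have hlog : HasFDerivAt (fun M : Matrix (Fin ℓ) (Fin h) ℝ => Real.log (Mᵀ * Sl * M).det)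
      (((Aᵀ * Sl * A).det)⁻¹ • (((Aᵀ * Sl * A).det • trCLM T).comp DQ)) A :=
    by have := (Real.hasDerivAt_log hdet0).comp_hasFDerivAt A hdetc; exact this
  have total := hpart1.add hlog
  suffices heq : traceCLM ((2 : ℝ) •
      ((Sl * A * (Aᵀ * Sl * A)⁻¹) * (1 - Sh * (Aᵀ * Sl * A)⁻¹)))
      = (trRCLM Sh).comp ((-sandCLM T T).comp DQ)
        + ((Aᵀ * Sl * A).det)⁻¹ • (((Aᵀ * Sl * A).det • trCLM T).comp DQ) by
    rw [heq]; exact total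
  -- symmetric facts
  have hSl' : Slᵀ = Sl := by
    rw [← Matrix.conjTranspose_eq_transpose_of_trivial]; exact hSl.1
  have hSh' : Shᵀ = Sh := hSh
  have hB₀symm : (Aᵀ * Sl * A)ᵀ = Aᵀ * Sl * A := by
    rw [Matrix.transpose_mul, Matrix.transpose_mul, Matrix.transpose_transpose, hSl',
      ← Matrix.mul_assoc]
  have hT' : Tᵀ = T := by
    rw [hTdef, Matrix.transpose_nonsing_inv, hB₀symm]
  apply ContinuousLinearMap.ext
  intro H
  simp only [traceCLM_apply, ContinuousLinearMap.add_apply, ContinuousLinearMap.comp_apply,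
    ContinuousLinearMap.smul_apply, ContinuousLinearMap.coe_smul', Pi.smul_apply,
    ContinuousLinearMap.precompR_apply, ContinuousLinearMap.precompL_apply,
    ContinuousLinearMap.neg_apply, ContinuousLinearMap.coe_id', id_eq,
    trRCLM_apply, trCLM_apply, sandCLM_apply, tsCLM_apply, mulCLM_apply, smul_eq_mul]
  rw [← mul_assoc (((Aᵀ * Sl * A).det)⁻¹), inv_mul_cancel₀ hdet0, one_mul]
  rw [← hTdef]
  have hDQH : ∀ H' : Matrix (Fin ℓ) (Fin h) ℝ, DQ H' = Aᵀ * Sl * H' + H'ᵀ * Sl * A :=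
    fun _ => rfl
  simp only [hDQH, ContinuousLinearMap.add_apply, ContinuousLinearMap.precompR_apply,
    ContinuousLinearMap.precompL_apply, ContinuousLinearMap.coe_id', id_eq, mulCLM_apply,
    tsCLM_apply, ContinuousLinearMap.compL_apply, ContinuousLinearMap.comp_apply,
    ContinuousLinearMap.coe_comp', Function.comp, ContinuousLinearMap.id_apply]
  simp only [Matrix.transpose_smul, Matrix.smul_mul, Matrix.trace_smul, Matrix.transpose_mul,
    Matrix.transpose_sub, Matrix.transpose_one, Matrix.transpose_transpose, hSl', hSh', hT',
    Matrix.mul_add, Matrix.add_mul, Matrix.mul_sub, Matrix.sub_mul, Matrix.mul_one,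
    Matrix.one_mul, Matrix.neg_mul, Matrix.trace_add, Matrix.trace_sub, Matrix.trace_neg,
    Matrix.mul_assoc, smul_eq_mul]
  have a1 : (T * (Hᵀ * (Sl * A))).trace = (T * (Aᵀ * (Sl * H))).trace := by
    rw [← Matrix.trace_transpose (T * (Hᵀ * (Sl * A)))]
    simp only [Matrix.transpose_mul, Matrix.transpose_transpose, hT', hSl']
    rw [Matrix.trace_mul_comm]
    simp only [Matrix.mul_assoc]
  have b1 : (T * (Hᵀ * (Sl * (A * (T * Sh))))).trace
      = (T * (Sh * (T * (Aᵀ * (Sl * H))))).trace := by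
    rw [← Matrix.trace_transpose (T * (Hᵀ * (Sl * (A * (T * Sh)))))]
    simp only [Matrix.transpose_mul, Matrix.transpose_transpose, hT', hSl', hSh']
    rw [Matrix.trace_mul_comm]
    simp only [Matrix.mul_assoc]
  have c1 : (T * (Aᵀ * (Sl * (H * (T * Sh))))).trace
      = (T * (Sh * (T * (Aᵀ * (Sl * H))))).trace := by
    rw [show T * (Aᵀ * (Sl * (H * (T * Sh)))) = (T * (Aᵀ * (Sl * H))) * (T * Sh) by
      simp only [Matrix.mul_assoc]]
    rw [Matrix.trace_mul_comm]
    simp only [Matrix.mul_assoc]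
  rw [a1, b1, c1]
  ring
end

section
/- Let Σℓ ∈ ℝ^{ℓ×ℓ} be symmetric positive definite, Σh ∈ ℝ^{h×h} symmetric, and B, S ∈ ℝ^{ℓ×h} fixed matrices. Define, for V ∈ ℝ^{ℓ×h}, A(V) = B⊙S⊙V and f(V) = Tr((A(V)ᵀΣℓA(V))⁻¹ Σh) + log det(A(V)ᵀΣℓA(V)). Let V be such that A = A(V) satisfies that AᵀΣℓA is positive definite, and set Ã = (AᵀΣℓA)⁻¹. Then f has Fréchet derivative at V given by H ↦ Tr(Gᵀ H) with gradient G = 2 (B⊙S) ⊙ ((Σℓ A Ã)(I_h − Σh Ã)). -/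
open Matrix

attribute [local instance] Matrix.normedAddCommGroup Matrix.normedSpace

namespace StmtAux


/-- Matrix multiplication as a continuous bilinear map. -/
noncomputable def mulCLM (a b c : ℕ) :
    Matrix (Fin a) (Fin b) ℝ →L[ℝ] Matrix (Fin b) (Fin c) ℝ →L[ℝ] Matrix (Fin a) (Fin c) ℝ :=
  LinearMap.toContinuousLinearMap
    { toFun := fun X => LinearMap.toContinuousLinearMap
        { toFun := fun Y => X * Y
          map_add' := fun Y Z => Matrix.mul_add X Y Z
          map_smul' := fun r Y => (Matrix.mul_smul X r Y) }
      map_add' := fun X Y => by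
        ext Z : 1
        simp [Matrix.add_mul]
      map_smul' := fun r X => by
        ext Z : 1
        simp [Matrix.smul_mul] }

@[simp] theorem mulCLM_apply {a b c : ℕ} (X : Matrix (Fin a) (Fin b) ℝ)
    (Y : Matrix (Fin b) (Fin c) ℝ) : mulCLM a b c X Y = X * Y := rfl

theorem hasFDerivAt_matmul {E : Type*} [NormedAddCommGroup E] [NormedSpace ℝ E]
    {a b c : ℕ} {u : E → Matrix (Fin a) (Fin b) ℝ} {v : E → Matrix (Fin b) (Fin c) ℝ}
    {u' : E →L[ℝ] Matrix (Fin a) (Fin b) ℝ} {v' : E →L[ℝ] Matrix (Fin b) (Fin c) ℝ} {x : E}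
    (hu : HasFDerivAt u u' x) (hv : HasFDerivAt v v' x) :
    HasFDerivAt (fun y => u y * v y)
      (@HAdd.hAdd (E →L[ℝ] Matrix (Fin a) (Fin c) ℝ) (E →L[ℝ] Matrix (Fin a) (Fin c) ℝ)
        (E →L[ℝ] Matrix (Fin a) (Fin c) ℝ) _
        (((mulCLM a b c).flip (v x)).comp u') (((mulCLM a b c) (u x)).comp v')) x := by
  have h := ((mulCLM a b c).isBoundedBilinearMap.hasFDerivAt (u x, v x)).comp x (hu.prodMk hv)
  refine h.congr_fderiv (Eq.symm ?_)
  refine ContinuousLinearMap.ext fun H => ?_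
  show u' H * v x + u x * v' H = _
  erw [ContinuousLinearMap.comp_apply, IsBoundedBilinearMap.deriv_apply]
  show _ = u x * v' H + u' H * v x
  abel


/-- det as a continuous multilinear map in the rows. -/
noncomputable def detCM (n : ℕ) :
    ContinuousMultilinearMap ℝ (fun _ : Fin n => (Fin n → ℝ)) ℝ :=
  MultilinearMap.mkContinuous
    (Matrix.detRowAlternating (n := Fin n) (R := ℝ)).toMultilinearMap
    (Nat.factorial n) (by
      intro m
      have : (Matrix.detRowAlternating (n := Fin n) (R := ℝ)).toMultilinearMap m
          = Matrix.det (Matrix.of m) := rfl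
      rw [this]
      rw [Matrix.det_apply]
      calc ‖∑ σ : Equiv.Perm (Fin n), Equiv.Perm.sign σ • ∏ i, Matrix.of m (σ i) i‖
          ≤ ∑ σ : Equiv.Perm (Fin n), ‖Equiv.Perm.sign σ • ∏ i, Matrix.of m (σ i) i‖ :=
            norm_sum_le _ _
        _ ≤ ∑ _σ : Equiv.Perm (Fin n), ∏ i, ‖m i‖ := by
            refine Finset.sum_le_sum fun σ _ => ?_
            have h1 : ‖(Equiv.Perm.sign σ : ℤˣ) • ∏ i, Matrix.of m (σ i) i‖
                = ‖∏ i, Matrix.of m (σ i) i‖ := by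
              rcases Int.units_eq_one_or (Equiv.Perm.sign σ) with h | h <;>
                simp [h, Units.smul_def]
            rw [h1]
            rw [norm_prod]
            have h2 : ∏ i, ‖Matrix.of m (σ i) i‖ ≤ ∏ i, ‖m (σ i)‖ := by
              refine Finset.prod_le_prod (fun i _ => norm_nonneg _) fun i _ => ?_
              exact norm_le_pi_norm (m (σ i)) i
            refine h2.trans ?_
            rw [Equiv.prod_comp σ (fun i => ‖m i‖)]
        _ = (Nat.factorial n : ℝ) * ∏ i, ‖m i‖ := by
            rw [Finset.sum_const, Finset.card_univ, Fintype.card_perm]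
            simp [nsmul_eq_mul, Fintype.card_fin]
      )

@[simp] theorem detCM_apply {n : ℕ} (M : Matrix (Fin n) (Fin n) ℝ) :
    detCM n M = M.det := rfl

/-- Jacobi's formula: derivative of det at `M` is `H ↦ trace (adjugate M * H)`. -/
theorem hasFDerivAt_det {n : ℕ} (M : Matrix (Fin n) (Fin n) ℝ) :
    HasFDerivAt (fun X : Matrix (Fin n) (Fin n) ℝ => X.det)
      (LinearMap.toContinuousLinearMap
        { toFun := fun H => (M.adjugate * H).trace
          map_add' := fun X Y => by simp [Matrix.mul_add]
          map_smul' := fun (c : ℝ) X => by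
            rw [Matrix.mul_smul, Matrix.trace_smul]; rfl }) M := by
  have h := (detCM n).hasFDerivAt (x := M)
  have hL : (detCM n).linearDeriv M = (LinearMap.toContinuousLinearMap
      { toFun := fun H : Matrix (Fin n) (Fin n) ℝ => (M.adjugate * H).trace
        map_add' := fun X Y => by simp [Matrix.mul_add]
        map_smul' := fun (c : ℝ) X => by
          rw [Matrix.mul_smul, Matrix.trace_smul]; rfl }) := by
    refine ContinuousLinearMap.ext fun H => ?_
    erw [ContinuousMultilinearMap.linearDeriv_apply]
    show ∑ i, detCM n (Function.update M i (H i)) = Matrix.trace (M.adjugate * Matrix.of H)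
    have hterm : ∀ (i : Fin n) (r : Fin n → ℝ),
        (M.updateRow i r).det = ∑ j, r j * M.adjugate j i := by
      intro i r
      have hr : r = ∑ j, r j • (Pi.single j 1 : Fin n → ℝ) := by
        funext k
        simp [Pi.single_apply, Finset.sum_ite_eq', mul_comm]
      conv_lhs => rw [hr]
      have h1 : (M.updateRow i (∑ j, r j • (Pi.single j 1 : Fin n → ℝ))).det
          = (Matrix.detRowAlternating (n := Fin n) (R := ℝ)).toMultilinearMap
              (Function.update M i (∑ j, r j • (Pi.single j 1 : Fin n → ℝ))) := rfl
      erw [h1, MultilinearMap.map_update_sum]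
      refine Finset.sum_congr rfl fun j _ => ?_
      erw [MultilinearMap.map_update_smul]
      have h2 : (Matrix.detRowAlternating (n := Fin n) (R := ℝ)).toMultilinearMap
          (Function.update M i (Pi.single j 1 : Fin n → ℝ))
          = (M.updateRow i (Pi.single j 1 : Fin n → ℝ)).det := rfl
      rw [h2, ← Matrix.adjugate_apply, smul_eq_mul]
    have hterm' : ∀ i : Fin n, detCM n (Function.update M i (H i))
        = ∑ j, H i j * M.adjugate j i := fun i => hterm i (H i)
    rw [Finset.sum_congr rfl fun i _ => hterm' i]
    rw [Matrix.trace]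
    rw [Finset.sum_comm]
    refine Finset.sum_congr rfl fun j _ => ?_
    simp [Matrix.diag, Matrix.mul_apply, mul_comm]
  exact h.congr_fderiv hL


theorem differentiable_det {n : ℕ} :
    Differentiable ℝ (fun X : Matrix (Fin n) (Fin n) ℝ => X.det) :=
  fun M => (hasFDerivAt_det M).differentiableAt

theorem differentiableAt_adjugate_comp {E : Type*} [NormedAddCommGroup E] [NormedSpace ℝ E]
    {n : ℕ} {F : E → Matrix (Fin n) (Fin n) ℝ} {x : E} (hF : DifferentiableAt ℝ F x) :
    DifferentiableAt ℝ (fun y => (F y).adjugate) x := by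
  refine differentiableAt_pi.2 ?_
  intro i
  refine differentiableAt_pi.2 ?_
  intro j
  have hentry : (fun y => (F y).adjugate i j)
      = fun y => ((F y).updateRow j (Pi.single i 1 : Fin n → ℝ)).det := by
    funext y
    rw [Matrix.adjugate_apply]
  rw [hentry]
  have hupd : DifferentiableAt ℝ
      (fun y => (F y).updateRow j (Pi.single i 1 : Fin n → ℝ)) x := by
    refine differentiableAt_pi.2 ?_
    intro k
    have : (fun y => (F y).updateRow j (Pi.single i 1 : Fin n → ℝ) k)
        = fun y => if k = j then (Pi.single i 1 : Fin n → ℝ) else F y k := by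
      funext y
      by_cases hk : k = j
      · subst hk; rw [Matrix.updateRow_self, if_pos rfl]
      · rw [Matrix.updateRow_ne hk, if_neg hk]
    rw [this]
    by_cases hk : k = j
    · simp only [hk, if_pos rfl]
      exact differentiableAt_const _
    · simp only [if_neg hk]
      have := differentiableAt_pi.1 hF k
      exact this
  exact (differentiable_det _).comp x hupd


theorem hasFDerivAt_inv_comp {E : Type*} [NormedAddCommGroup E] [NormedSpace ℝ E]
    {n : ℕ} {F : E → Matrix (Fin n) (Fin n) ℝ} {F' : E →L[ℝ] Matrix (Fin n) (Fin n) ℝ}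
    {x : E} (hF : HasFDerivAt F F' x) (hdet : (F x).det ≠ 0) :
    HasFDerivAt (fun y => (F y)⁻¹)
      (-((mulCLM n n n ((F x)⁻¹)).comp (((mulCLM n n n).flip ((F x)⁻¹)).comp F'))) x := by
  have hdd : DifferentiableAt ℝ (fun y => (F y).det) x :=
    (differentiable_det (F x)).comp x hF.differentiableAt
  have hNdiff : DifferentiableAt ℝ (fun y => (F y)⁻¹) x := by
    have heq : (fun y => (F y)⁻¹) = fun y => ((F y).det)⁻¹ • (F y).adjugate := by
      funext y
      rw [Matrix.inv_def, Ring.inverse_eq_inv']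
    rw [heq]
    exact (hdd.inv hdet).smul (differentiableAt_adjugate_comp hF.differentiableAt)
  set N' := fderiv ℝ (fun y => (F y)⁻¹) x with hN'
  have hN : HasFDerivAt (fun y => (F y)⁻¹) N' x := hNdiff.hasFDerivAt
  have hev : (fun y => (F y)⁻¹ * F y) =ᶠ[nhds x] fun _ => (1 : Matrix (Fin n) (Fin n) ℝ) := by
    have : ∀ᶠ y in nhds x, (F y).det ≠ 0 := hdd.continuousAt.eventually_ne hdet
    exact this.mono fun y hy => Matrix.nonsing_inv_mul _ (Ne.isUnit hy)
  have hprod := hasFDerivAt_matmul hN hF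
  have hzero : HasFDerivAt (fun y => (F y)⁻¹ * F y)
      (0 : E →L[ℝ] Matrix (Fin n) (Fin n) ℝ) x :=
    (hasFDerivAt_const (1 : Matrix (Fin n) (Fin n) ℝ) x).congr_of_eventuallyEq hev
  have hD0 := hprod.unique hzero
  refine hN.congr_fderiv (ContinuousLinearMap.ext fun H => ?_)
  have h1 : N' H * F x + (F x)⁻¹ * F' H = 0 := by
    have := congrArg (fun L : E →L[ℝ] Matrix (Fin n) (Fin n) ℝ => L H) hD0
    exact this
  have h2 : N' H * F x = -((F x)⁻¹ * F' H) := by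
    rw [eq_neg_iff_add_eq_zero]; exact h1
  have h3 : N' H * F x * (F x)⁻¹ = N' H := Matrix.mul_nonsing_inv_cancel_right _ _ (Ne.isUnit hdet)
  show N' H = -((F x)⁻¹ * (F' H * (F x)⁻¹))
  rw [← h3, h2, Matrix.neg_mul, Matrix.mul_assoc]



theorem trace_transpose_mul_eq {l m : ℕ} (X Y : Matrix (Fin l) (Fin m) ℝ) :
    (Xᵀ * Y).trace = ∑ j, ∑ i, X i j * Y i j := by
  simp [Matrix.trace, Matrix.diag, Matrix.mul_apply, Matrix.transpose_apply]

theorem key {l m : ℕ} (Sl : Matrix (Fin l) (Fin l) ℝ) (hSl' : Slᵀ = Sl)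
    (Sh : Matrix (Fin m) (Fin m) ℝ) (hSh' : Shᵀ = Sh)
    (A C : Matrix (Fin l) (Fin m) ℝ) (hdet : (Aᵀ * Sl * A).det ≠ 0) :
    (-((Aᵀ * Sl * A)⁻¹ * (((Cᵀ * Sl) * A + (Aᵀ * Sl) * C) * (Aᵀ * Sl * A)⁻¹)) * Sh).trace
      + ((Aᵀ * Sl * A).det)⁻¹ •
          ((Aᵀ * Sl * A).adjugate * ((Cᵀ * Sl) * A + (Aᵀ * Sl) * C)).trace
    = 2 * (((Sl * A * (Aᵀ * Sl * A)⁻¹) * (1 - Sh * (Aᵀ * Sl * A)⁻¹))ᵀ * C).trace := by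
  have hMT : (Aᵀ * Sl * A)ᵀ = Aᵀ * Sl * A := by
    rw [Matrix.transpose_mul, Matrix.transpose_mul, Matrix.transpose_transpose, hSl',
      ← Matrix.mul_assoc]
  have hGT : ((Aᵀ * Sl * A)⁻¹)ᵀ = (Aᵀ * Sl * A)⁻¹ := by
    rw [Matrix.transpose_nonsing_inv, hMT]
  set M := Aᵀ * Sl * A with hM
  set G := M⁻¹ with hG
  set X := (Aᵀ * Sl) * C with hX
  set Y := (Cᵀ * Sl) * A with hY
  have hYX : Y = Xᵀ := by
    rw [hY, hX, Matrix.transpose_mul, Matrix.transpose_mul, Matrix.transpose_transpose, hSl',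
      ← Matrix.mul_assoc]
  -- adjugate to inverse
  have hAdj : ∀ D : Matrix (Fin m) (Fin m) ℝ,
      (M.det)⁻¹ • ((M.adjugate) * D).trace = (G * D).trace := by
    intro D
    have hGdef : G = (M.det)⁻¹ • M.adjugate := by
      rw [hG, Matrix.inv_def, Ring.inverse_eq_inv']
    rw [hGdef, Matrix.smul_mul, Matrix.trace_smul]
  -- the two linear-term traces agree
  have t2 : (G * Y).trace = (G * X).trace := by
    rw [hYX]
    calc (G * Xᵀ).trace = ((G * Xᵀ)ᵀ).trace := (Matrix.trace_transpose _).symm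
      _ = (X * Gᵀ).trace := by rw [Matrix.transpose_mul, Matrix.transpose_transpose]
      _ = (X * G).trace := by rw [hGT]
      _ = (G * X).trace := Matrix.trace_mul_comm _ _
  -- the quadratic-term traces agree
  have t3 : ((G * (Y * G)) * Sh).trace = (Sh * (G * (X * G))).trace := by
    rw [hYX]
    calc ((G * (Xᵀ * G)) * Sh).trace
        = (((G * (Xᵀ * G)) * Sh)ᵀ).trace := (Matrix.trace_transpose _).symm
      _ = (Shᵀ * ((Gᵀ * Xᵀᵀ) * Gᵀ)).trace := by
          simp only [Matrix.transpose_mul]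
      _ = (Sh * (G * (X * G))).trace := by
          rw [hSh', hGT, Matrix.transpose_transpose]
          simp only [Matrix.mul_assoc]
  have t4 : ((G * (X * G)) * Sh).trace = (Sh * (G * (X * G))).trace :=
    Matrix.trace_mul_comm _ _
  -- RHS transpose computation
  have hPT : ((Sl * A * G) * (1 - Sh * G))ᵀ = (1 - G * Sh) * (G * (Aᵀ * Sl)) := by
    rw [Matrix.transpose_mul, Matrix.transpose_sub, Matrix.transpose_one, Matrix.transpose_mul,
      hGT, hSh', Matrix.transpose_mul, Matrix.transpose_mul, hGT, hSl']
  have hRHS : (((Sl * A * G) * (1 - Sh * G))ᵀ * C).trace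
      = (G * X).trace - (Sh * (G * (X * G))).trace := by
    rw [hPT, Matrix.sub_mul, Matrix.one_mul, Matrix.sub_mul, Matrix.trace_sub]
    congr 1
    · simp only [hX, Matrix.mul_assoc]
    · calc (((G * Sh) * (G * (Aᵀ * Sl))) * C).trace
          = (G * (Sh * (G * (Aᵀ * (Sl * C))))).trace := by simp only [Matrix.mul_assoc]
        _ = ((Sh * (G * (Aᵀ * (Sl * C)))) * G).trace := Matrix.trace_mul_comm _ _
        _ = (Sh * (G * (X * G))).trace := by simp only [hX, Matrix.mul_assoc]
  -- expand LHS
  have L2 : M.det⁻¹ • (M.adjugate * (Y + X)).trace = (G * Y).trace + (G * X).trace := by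
    rw [hAdj, Matrix.mul_add, Matrix.trace_add]
  have L1 : ((-(G * ((Y + X) * G))) * Sh).trace
      = -(((G * (Y * G)) * Sh).trace + ((G * (X * G)) * Sh).trace) := by
    rw [Matrix.add_mul, Matrix.mul_add, Matrix.neg_mul, Matrix.trace_neg, Matrix.add_mul,
      Matrix.trace_add]
  rw [L1, L2, t2, t3, t4, hRHS]
  ring


end StmtAux

/-- Partial derivative w.r.t. `V` of the partial-prior objective
`f(V) = Tr((A(V)ᵀΣℓA(V))⁻¹ Σh) + log det(A(V)ᵀΣℓA(V))`, `A(V) = B⊙S⊙V`: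
the Euclidean gradient at `V` is `2 (B⊙S) ⊙ ((Σℓ A Ã)(I_h − Σh Ã))`,
with `A = B⊙S⊙V` and `Ã = (AᵀΣℓA)⁻¹`. -/
theorem stmt_6 {ℓ h : ℕ}
    (Sl : Matrix (Fin ℓ) (Fin ℓ) ℝ) (hSl : Sl.PosDef)
    (Sh : Matrix (Fin h) (Fin h) ℝ) (hSh : Sh.IsSymm)
    (B S V : Matrix (Fin ℓ) (Fin h) ℝ)
    (hpd : ((B ⊙ S ⊙ V)ᵀ * Sl * (B ⊙ S ⊙ V)).PosDef) :
    HasFDerivAt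
      (fun W : Matrix (Fin ℓ) (Fin h) ℝ =>
        (((B ⊙ S ⊙ W)ᵀ * Sl * (B ⊙ S ⊙ W))⁻¹ * Sh).trace +
          Real.log ((B ⊙ S ⊙ W)ᵀ * Sl * (B ⊙ S ⊙ W)).det)
      (traceCLM ((2 : ℝ) •
        ((B ⊙ S) ⊙
          ((Sl * (B ⊙ S ⊙ V) * ((B ⊙ S ⊙ V)ᵀ * Sl * (B ⊙ S ⊙ V))⁻¹) *
            (1 - Sh * ((B ⊙ S ⊙ V)ᵀ * Sl * (B ⊙ S ⊙ V))⁻¹)))))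
      V := by
  set A := B ⊙ S ⊙ V with hA
  have hdet0 : ((B ⊙ S ⊙ V)ᵀ * Sl * (B ⊙ S ⊙ V)).det ≠ 0 := ne_of_gt hpd.det_pos
  -- the linear map W ↦ B ⊙ S ⊙ W
  set hadCLM : Matrix (Fin ℓ) (Fin h) ℝ →L[ℝ] Matrix (Fin ℓ) (Fin h) ℝ :=
    LinearMap.toContinuousLinearMap
      { toFun := fun W => B ⊙ S ⊙ W
        map_add' := fun X Y => by
          ext i j
          simp [Matrix.hadamard_apply, Matrix.add_apply, mul_add]
        map_smul' := fun (c : ℝ) X => by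
          ext i j
          simp [Matrix.hadamard_apply, Matrix.smul_apply, smul_eq_mul]
          ring } with hhadCLM
  -- the linear map W ↦ (B ⊙ S ⊙ W)ᵀ * Sl
  set leftCLM : Matrix (Fin ℓ) (Fin h) ℝ →L[ℝ] Matrix (Fin h) (Fin ℓ) ℝ :=
    LinearMap.toContinuousLinearMap
      { toFun := fun W => (B ⊙ S ⊙ W)ᵀ * Sl
        map_add' := fun X Y => by
          ext i j
          simp [Matrix.mul_apply, Matrix.hadamard_apply, Matrix.transpose_apply,
            Matrix.add_apply, mul_add, add_mul, Finset.sum_add_distrib]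
        map_smul' := fun (c : ℝ) X => by
          ext i j
          simp [Matrix.mul_apply, Matrix.hadamard_apply, Matrix.transpose_apply,
            Matrix.smul_apply, smul_eq_mul, Finset.mul_sum]
          congr 1; funext k; ring } with hleftCLM
  have hAder : HasFDerivAt (fun W : Matrix (Fin ℓ) (Fin h) ℝ => B ⊙ S ⊙ W) hadCLM V :=
    hadCLM.hasFDerivAt
  have hPder : HasFDerivAt (fun W : Matrix (Fin ℓ) (Fin h) ℝ => (B ⊙ S ⊙ W)ᵀ * Sl) leftCLM V :=
    leftCLM.hasFDerivAt
  have hMder : HasFDerivAt (fun W : Matrix (Fin ℓ) (Fin h) ℝ => (B ⊙ S ⊙ W)ᵀ * Sl * (B ⊙ S ⊙ W))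
      (@HAdd.hAdd (Matrix (Fin ℓ) (Fin h) ℝ →L[ℝ] Matrix (Fin h) (Fin h) ℝ) (Matrix (Fin ℓ) (Fin h) ℝ →L[ℝ] Matrix (Fin h) (Fin h) ℝ) (Matrix (Fin ℓ) (Fin h) ℝ →L[ℝ] Matrix (Fin h) (Fin h) ℝ) _
        (((StmtAux.mulCLM h ℓ h).flip (B ⊙ S ⊙ V)).comp leftCLM)
        (((StmtAux.mulCLM h ℓ h) ((B ⊙ S ⊙ V)ᵀ * Sl)).comp hadCLM)) V :=
    StmtAux.hasFDerivAt_matmul hPder hAder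
  set DM := @HAdd.hAdd (Matrix (Fin ℓ) (Fin h) ℝ →L[ℝ] Matrix (Fin h) (Fin h) ℝ) (Matrix (Fin ℓ) (Fin h) ℝ →L[ℝ] Matrix (Fin h) (Fin h) ℝ) (Matrix (Fin ℓ) (Fin h) ℝ →L[ℝ] Matrix (Fin h) (Fin h) ℝ) _
      (((StmtAux.mulCLM h ℓ h).flip (B ⊙ S ⊙ V)).comp leftCLM)
      (((StmtAux.mulCLM h ℓ h) ((B ⊙ S ⊙ V)ᵀ * Sl)).comp hadCLM) with hDM
  have hinv := StmtAux.hasFDerivAt_inv_comp hMder hdet0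
  set Ninv' := -((StmtAux.mulCLM h h h (((B ⊙ S ⊙ V)ᵀ * Sl * (B ⊙ S ⊙ V))⁻¹)).comp
      (((StmtAux.mulCLM h h h).flip (((B ⊙ S ⊙ V)ᵀ * Sl * (B ⊙ S ⊙ V))⁻¹)).comp DM)) with hNinv'
  set T : Matrix (Fin h) (Fin h) ℝ →L[ℝ] ℝ :=
    LinearMap.toContinuousLinearMap
      { toFun := fun X => (X * Sh).trace
        map_add' := fun X Y => by simp [Matrix.add_mul]
        map_smul' := fun (c : ℝ) X => by
          rw [Matrix.smul_mul, Matrix.trace_smul]; rfl } with hT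
  have h1 : HasFDerivAt
      (fun W : Matrix (Fin ℓ) (Fin h) ℝ => (((B ⊙ S ⊙ W)ᵀ * Sl * (B ⊙ S ⊙ W))⁻¹ * Sh).trace)
      (T.comp Ninv') V := T.hasFDerivAt.comp V hinv
  set Jac := LinearMap.toContinuousLinearMap
      { toFun := fun H : Matrix (Fin h) (Fin h) ℝ =>
          (((B ⊙ S ⊙ V)ᵀ * Sl * (B ⊙ S ⊙ V)).adjugate * H).trace
        map_add' := fun X Y => by simp [Matrix.mul_add]
        map_smul' := fun (c : ℝ) X => by
          rw [Matrix.mul_smul, Matrix.trace_smul]; rfl } with hJac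
  have h2 : HasFDerivAt
      (fun W : Matrix (Fin ℓ) (Fin h) ℝ => ((B ⊙ S ⊙ W)ᵀ * Sl * (B ⊙ S ⊙ W)).det)
      (Jac.comp DM) V := (StmtAux.hasFDerivAt_det _).comp V hMder
  have h3 : HasFDerivAt
      (fun W : Matrix (Fin ℓ) (Fin h) ℝ => Real.log ((B ⊙ S ⊙ W)ᵀ * Sl * (B ⊙ S ⊙ W)).det)
      ((((B ⊙ S ⊙ V)ᵀ * Sl * (B ⊙ S ⊙ V)).det)⁻¹ • (Jac.comp DM)) V :=
    (Real.hasDerivAt_log hdet0).comp_hasFDerivAt (h₂ := Real.log) V h2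
  have htot := h1.add h3
  refine htot.congr_fderiv (ContinuousLinearMap.ext fun H => ?_)
  have hSl' : Slᵀ = Sl := by
    rw [← Matrix.conjTranspose_eq_transpose_of_trivial]
    exact hSl.1
  show ((-(((B ⊙ S ⊙ V)ᵀ * Sl * (B ⊙ S ⊙ V))⁻¹ *
        ((((B ⊙ S ⊙ H)ᵀ * Sl) * (B ⊙ S ⊙ V) + ((B ⊙ S ⊙ V)ᵀ * Sl) * (B ⊙ S ⊙ H)) *
          ((B ⊙ S ⊙ V)ᵀ * Sl * (B ⊙ S ⊙ V))⁻¹))) * Sh).trace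
      + (((B ⊙ S ⊙ V)ᵀ * Sl * (B ⊙ S ⊙ V)).det)⁻¹ •
          (((B ⊙ S ⊙ V)ᵀ * Sl * (B ⊙ S ⊙ V)).adjugate *
            (((B ⊙ S ⊙ H)ᵀ * Sl) * (B ⊙ S ⊙ V) + ((B ⊙ S ⊙ V)ᵀ * Sl) * (B ⊙ S ⊙ H))).trace
    = (((2 : ℝ) • ((B ⊙ S) ⊙
        ((Sl * (B ⊙ S ⊙ V) * ((B ⊙ S ⊙ V)ᵀ * Sl * (B ⊙ S ⊙ V))⁻¹) *
          (1 - Sh * ((B ⊙ S ⊙ V)ᵀ * Sl * (B ⊙ S ⊙ V))⁻¹))))ᵀ * H).trace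
  have hswap : ((((B ⊙ S) ⊙
        ((Sl * (B ⊙ S ⊙ V) * ((B ⊙ S ⊙ V)ᵀ * Sl * (B ⊙ S ⊙ V))⁻¹) *
          (1 - Sh * ((B ⊙ S ⊙ V)ᵀ * Sl * (B ⊙ S ⊙ V))⁻¹)))ᵀ) * H).trace
      = ((((Sl * (B ⊙ S ⊙ V) * ((B ⊙ S ⊙ V)ᵀ * Sl * (B ⊙ S ⊙ V))⁻¹) *
          (1 - Sh * ((B ⊙ S ⊙ V)ᵀ * Sl * (B ⊙ S ⊙ V))⁻¹))ᵀ) * (B ⊙ S ⊙ H)).trace := by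
    rw [StmtAux.trace_transpose_mul_eq, StmtAux.trace_transpose_mul_eq]
    refine Finset.sum_congr rfl fun j _ => Finset.sum_congr rfl fun i _ => ?_
    simp only [Matrix.hadamard_apply]
    ring
  rw [Matrix.transpose_smul, Matrix.smul_mul, Matrix.trace_smul, hswap, smul_eq_mul]
  exact StmtAux.key Sl hSl' Sh hSh (B ⊙ S ⊙ V) (B ⊙ S ⊙ H) hdet0
end

section
/- Let ℓ, h be positive integers, τ, ρ > 0 real numbers, and let B ∈ {0,1}^{ℓ×h}, S, V^q, Y, U, G ∈ ℝ^{ℓ×h}. Define φ(V) = Tr(Gᵀ(V − V^q)) + (τ/2)‖V − V^q‖²_F + (ρ/2)‖B⊙S⊙V − Y + U‖²_F. Then φ has a unique global minimizer V* over ℝ^{ℓ×h}, given entrywise by v*_{ij} = (ρ b_{ij} s_{ij} (y_{ij} − u_{ij}) + τ v^q_{ij} − g_{ij}) / (τ + ρ b_{ij} s_{ij}²), where b_{ij}² = b_{ij} is used since b_{ij} ∈ {0,1}. -/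
open Matrix

private lemma aux_pos (τ ρ b s : ℝ) (hτ : 0 < τ) (hρ : 0 < ρ) (hb : b = 0 ∨ b = 1) :
    0 < τ + ρ * b * s ^ 2 := by
  rcases hb with hb | hb <;> subst hb <;> nlinarith [sq_nonneg s]

private lemma aux_key (τ ρ b s vq y u g w : ℝ) (hτ : 0 < τ) (hρ : 0 < ρ)
    (hb : b = 0 ∨ b = 1) :
    (g * (w - vq) + τ / 2 * (w - vq) ^ 2 + ρ / 2 * (b * s * w - y + u) ^ 2)
      - (g * ((ρ * b * s * (y - u) + τ * vq - g) / (τ + ρ * b * s ^ 2) - vq)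
        + τ / 2 * ((ρ * b * s * (y - u) + τ * vq - g) / (τ + ρ * b * s ^ 2) - vq) ^ 2
        + ρ / 2 * (b * s * ((ρ * b * s * (y - u) + τ * vq - g) / (τ + ρ * b * s ^ 2)) - y + u) ^ 2)
    = (τ + ρ * b * s ^ 2) / 2
        * (w - (ρ * b * s * (y - u) + τ * vq - g) / (τ + ρ * b * s ^ 2)) ^ 2 := by
  have ha := aux_pos τ ρ b s hτ hρ hb
  rcases hb with hb | hb <;> subst hb <;> field_simp <;> ring

/-- The strongly convex `V`-subproblem of CLinSEPAL (partial prior):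
`φ(V) = Tr(Gᵀ(V−Vq)) + (τ/2)‖V−Vq‖²_F + (ρ/2)‖B⊙S⊙V − Y + U‖²_F` has the unique
global minimizer given entrywise by
`v*_{ij} = (ρ b_{ij} s_{ij}(y_{ij} − u_{ij}) + τ v^q_{ij} − g_{ij}) / (τ + ρ b_{ij} s_{ij}²)`. -/
theorem stmt_9 {ℓ h : ℕ} (hℓ : 0 < ℓ) (hh : 0 < h)
    (τ ρ : ℝ) (hτ : 0 < τ) (hρ : 0 < ρ)
    (B S Vq Y U G : Matrix (Fin ℓ) (Fin h) ℝ)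
    (hB : ∀ i j, B i j = 0 ∨ B i j = 1) :
    let φ : Matrix (Fin ℓ) (Fin h) ℝ → ℝ := fun V =>
      (Gᵀ * (V - Vq)).trace
        + τ / 2 * ∑ i, ∑ j, (V i j - Vq i j) ^ 2
        + ρ / 2 * ∑ i, ∑ j, ((B ⊙ S ⊙ V) i j - Y i j + U i j) ^ 2
    let Vstar : Matrix (Fin ℓ) (Fin h) ℝ := Matrix.of fun i j =>
      (ρ * B i j * S i j * (Y i j - U i j) + τ * Vq i j - G i j)
        / (τ + ρ * B i j * S i j ^ 2)
    (∀ W, φ Vstar ≤ φ W) ∧ ∀ W, (∀ V', φ W ≤ φ V') → W = Vstar := by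
  intro φ Vstar
  have hφ : ∀ V : Matrix (Fin ℓ) (Fin h) ℝ, φ V =
      ∑ i, ∑ j, (G i j * (V i j - Vq i j) + τ / 2 * (V i j - Vq i j) ^ 2
        + ρ / 2 * (B i j * S i j * V i j - Y i j + U i j) ^ 2) := by
    intro V
    simp only [φ, Matrix.trace, Matrix.diag, Matrix.mul_apply, Matrix.transpose_apply,
      Matrix.sub_apply, Matrix.hadamard, Matrix.of_apply, Finset.mul_sum]
    rw [Finset.sum_comm]
    rw [← Finset.sum_add_distrib, ← Finset.sum_add_distrib]
    refine Finset.sum_congr rfl fun i _ => ?_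
    rw [← Finset.sum_add_distrib, ← Finset.sum_add_distrib]
  have hdiff : ∀ W : Matrix (Fin ℓ) (Fin h) ℝ, φ W - φ Vstar =
      ∑ i, ∑ j, (τ + ρ * B i j * S i j ^ 2) / 2 * (W i j - Vstar i j) ^ 2 := by
    intro W
    rw [hφ, hφ, ← Finset.sum_sub_distrib]
    refine Finset.sum_congr rfl fun i _ => ?_
    rw [← Finset.sum_sub_distrib]
    refine Finset.sum_congr rfl fun j _ => ?_
    exact aux_key τ ρ (B i j) (S i j) (Vq i j) (Y i j) (U i j) (G i j) (W i j) hτ hρ (hB i j)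
  have hnn : ∀ (W : Matrix (Fin ℓ) (Fin h) ℝ) i j,
      0 ≤ (τ + ρ * B i j * S i j ^ 2) / 2 * (W i j - Vstar i j) ^ 2 := by
    intro W i j
    have := aux_pos τ ρ (B i j) (S i j) hτ hρ (hB i j)
    positivity
  constructor
  · intro W
    have h1 : 0 ≤ φ W - φ Vstar := by
      rw [hdiff]
      exact Finset.sum_nonneg fun i _ => Finset.sum_nonneg fun j _ => hnn W i j
    linarith
  · intro W hW
    have h1 : φ W - φ Vstar ≤ 0 := by linarith [hW Vstar]
    rw [hdiff] at h1
    have h2 : ∀ i ∈ Finset.univ, ∀ j ∈ Finset.univ,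
        (τ + ρ * B i j * S i j ^ 2) / 2 * (W i j - Vstar i j) ^ 2 = 0 := by
      have := (Finset.sum_eq_zero_iff_of_nonneg
        (fun i _ => Finset.sum_nonneg fun j _ => hnn W i j)).mp
        (le_antisymm h1 (Finset.sum_nonneg fun i _ => Finset.sum_nonneg fun j _ => hnn W i j))
      intro i hi j hj
      exact (Finset.sum_eq_zero_iff_of_nonneg (fun j _ => hnn W i j)).mp (this i hi) j hj
    ext i j
    have h3 := h2 i (Finset.mem_univ i) j (Finset.mem_univ j)
    have ha := aux_pos τ ρ (B i j) (S i j) hτ hρ (hB i j)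
    have : (W i j - Vstar i j) ^ 2 = 0 := by
      rcases mul_eq_zero.mp h3 with h | h
      · exfalso; linarith
      · exact h
    have := pow_eq_zero_iff (n := 2) (by norm_num) |>.mp this
    linarith
end
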